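/- There exists a universal constant C such that for any matrices Â, A ∈ ℝ^{n×p}, vectors β*, β̂ ∈ ℝ^p, φ, ε ∈ ℝⁿ with Y = Aβ* + φ + ε and β̂ a minimizer of β ↦ ‖Âβ − Y‖₂², one has ‖Âβ̂ − Aβ*‖₂² ≤ C·max(‖Â − A‖²_{2,∞}‖β*‖₁², ‖φ‖₂², ⟨Â(β̂ − β*), ε⟩). -/

import Mathlib

open Matrix

/-- ℓ₂ norm of a vector in `ℝⁿ`. -/
noncomputable def l2 {n : ℕ} (v : Fin n → ℝ) : ℝ := Real.sqrt (∑ i, v i ^ 2)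

/-- ℓ₁ norm of a vector in `ℝⁿ`. -/
def l1 {n : ℕ} (v : Fin n → ℝ) : ℝ := ∑ i, |v i|

/-- Euclidean inner product on `ℝⁿ`. -/
def dot {n : ℕ} (u v : Fin n → ℝ) : ℝ := ∑ i, u i * v i

/-- The `(2,∞)` norm of a matrix: maximal ℓ₂ norm of its columns. -/
noncomputable def norm2inf {n p : ℕ} (M : Matrix (Fin n) (Fin p) ℝ) : ℝ :=
  ⨆ j, l2 (fun i => M i j)

lemma l2_nonneg {n : ℕ} (v : Fin n → ℝ) : 0 ≤ l2 v := Real.sqrt_nonneg _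

lemma l2_sq {n : ℕ} (v : Fin n → ℝ) : l2 v ^ 2 = ∑ i, v i ^ 2 :=
  Real.sq_sqrt (Finset.sum_nonneg fun _ _ => sq_nonneg _)

lemma l2_eq_norm {n : ℕ} (v : Fin n → ℝ) :
    l2 v = ‖(WithLp.equiv 2 (Fin n → ℝ)).symm v‖ := by
  rw [EuclideanSpace.norm_eq]
  simp [l2, sq_abs]

lemma l2_sum_le {n : ℕ} {ι : Type*} (s : Finset ι) (f : ι → Fin n → ℝ) :
    l2 (fun i => ∑ j ∈ s, f j i) ≤ ∑ j ∈ s, l2 (f j) := by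
  simp only [l2_eq_norm]
  have h : (WithLp.equiv 2 (Fin n → ℝ)).symm (fun i => ∑ j ∈ s, f j i)
      = ∑ j ∈ s, (WithLp.equiv 2 (Fin n → ℝ)).symm (f j) := by
    ext i
    simp
  rw [h]
  exact norm_sum_le s _

lemma l2_smul {n : ℕ} (c : ℝ) (v : Fin n → ℝ) :
    l2 (fun i => c * v i) = |c| * l2 v := by
  simp only [l2_eq_norm]
  have h : (WithLp.equiv 2 (Fin n → ℝ)).symm (fun i => c * v i)
      = c • (WithLp.equiv 2 (Fin n → ℝ)).symm v := by
    ext i; simp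
  rw [h, norm_smul, Real.norm_eq_abs]

lemma col_le_norm2inf {n p : ℕ} (B : Matrix (Fin n) (Fin p) ℝ) (j : Fin p) :
    l2 (fun i => B i j) ≤ norm2inf B := by
  rw [norm2inf]
  exact le_ciSup (f := fun j => l2 fun i => B i j) (Set.Finite.bddAbove (Set.finite_range _)) j

lemma norm2inf_nonneg {n p : ℕ} (B : Matrix (Fin n) (Fin p) ℝ) :
    0 ≤ norm2inf B :=
  Real.iSup_nonneg fun _ => l2_nonneg _

lemma l2_mulVec_le {n p : ℕ} (B : Matrix (Fin n) (Fin p) ℝ) (v : Fin p → ℝ) :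
    l2 (B *ᵥ v) ≤ norm2inf B * l1 v := by
  have h : B *ᵥ v = fun i => ∑ j, v j * B i j := by
    funext i
    simp [Matrix.mulVec, dotProduct, mul_comm]
  rw [h]
  calc l2 (fun i => ∑ j, v j * B i j)
      ≤ ∑ j, l2 (fun i => v j * B i j) := l2_sum_le _ _
    _ = ∑ j, |v j| * l2 (fun i => B i j) := by
        refine Finset.sum_congr rfl fun j _ => ?_
        exact l2_smul (v j) _
    _ ≤ ∑ j, |v j| * norm2inf B := by
        refine Finset.sum_le_sum fun j _ => ?_
        exact mul_le_mul_of_nonneg_left (col_le_norm2inf B j) (abs_nonneg _)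
    _ = norm2inf B * l1 v := by
        rw [l1, Finset.mul_sum]
        refine Finset.sum_congr rfl fun j _ => mul_comm _ _

lemma sum_sq_expand {n : ℕ} (a b : Fin n → ℝ) :
    ∑ i, (a i - b i) ^ 2 = ∑ i, a i ^ 2 - 2 * dot a b + ∑ i, b i ^ 2 := by
  rw [dot, Finset.mul_sum, ← Finset.sum_sub_distrib, ← Finset.sum_add_distrib]
  refine Finset.sum_congr rfl fun i _ => by ring

/-- deterministic training error bound: there is a universal constant `C > 0`
such that for all `Â, A, β*, β̂, φ, ε` with `Y = Aβ* + φ + ε` and `β̂` minimizing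
`β ↦ ‖Âβ − Y‖₂²`, one has
`‖Âβ̂ − Aβ*‖₂² ≤ C·max(‖Â − A‖²_{2,∞}‖β*‖₁², ‖φ‖₂², ⟨Â(β̂ − β*), ε⟩)`. -/
theorem training_error_intermediate_bound :
    ∃ C : ℝ, 0 < C ∧
      ∀ (n p : ℕ) (Ahat A : Matrix (Fin n) (Fin p) ℝ)
        (βstar βhat : Fin p → ℝ) (φ ε Y : Fin n → ℝ),
        Y = A *ᵥ βstar + φ + ε →
        (∀ β : Fin p → ℝ, l2 (Ahat *ᵥ βhat - Y) ^ 2 ≤ l2 (Ahat *ᵥ β - Y) ^ 2) →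
        l2 (Ahat *ᵥ βhat - A *ᵥ βstar) ^ 2
          ≤ C * max (max (norm2inf (Ahat - A) ^ 2 * l1 βstar ^ 2) (l2 φ ^ 2))
              (dot (Ahat *ᵥ (βhat - βstar)) ε) := by
  refine ⟨15, by norm_num, ?_⟩
  intro n p Ahat A βstar βhat φ ε Y hY hopt
  set Δ : Fin n → ℝ := Ahat *ᵥ βhat - A *ᵥ βstar with hΔ
  set u : Fin n → ℝ := (Ahat - A) *ᵥ βstar with hu
  set w : Fin n → ℝ := φ + ε with hw
  set D : ℝ := dot (Ahat *ᵥ (βhat - βstar)) ε with hD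
  set M : ℝ := max (max (norm2inf (Ahat - A) ^ 2 * l1 βstar ^ 2) (l2 φ ^ 2)) D with hM
  -- basic optimality inequality with β = βstar
  have h1 : Ahat *ᵥ βhat - Y = fun i => Δ i - w i := by
    funext i
    simp only [hY, hΔ, hw, Pi.add_apply, Pi.sub_apply]
    ring
  have h2 : Ahat *ᵥ βstar - Y = fun i => u i - w i := by
    funext i
    simp only [hY, hu, hw, Matrix.sub_mulVec, Pi.add_apply, Pi.sub_apply]
    ring
  have hkey : ∑ i, (Δ i - w i) ^ 2 ≤ ∑ i, (u i - w i) ^ 2 := by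
    have := hopt βstar
    rw [h1, h2, l2_sq, l2_sq] at this
    exact this
  rw [sum_sq_expand, sum_sq_expand] at hkey
  -- Δ - u = Ahat *ᵥ (βhat - βstar)
  have hDu : (fun i => Δ i - u i) = Ahat *ᵥ (βhat - βstar) := by
    funext i
    simp only [hΔ, hu, Matrix.mulVec_sub, Matrix.sub_mulVec, Pi.sub_apply]
    ring
  -- dot linearity
  have hdotw : dot Δ w - dot u w
      = dot (fun i => Δ i - u i) φ + dot (fun i => Δ i - u i) ε := by
    simp only [dot, hw, Pi.add_apply]
    rw [← Finset.sum_sub_distrib, ← Finset.sum_add_distrib]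
    refine Finset.sum_congr rfl fun i _ => by ring
  have hdotε : dot (fun i => Δ i - u i) ε = D := by rw [hD, ← hDu]
  -- pointwise AM-GM bound on the φ cross term
  have hb1 : 2 * dot (fun i => Δ i - u i) φ
      ≤ (1/4) * (∑ i, (Δ i - u i) ^ 2) + 4 * ∑ i, φ i ^ 2 := by
    rw [dot, Finset.mul_sum, Finset.mul_sum, Finset.mul_sum, ← Finset.sum_add_distrib]
    refine Finset.sum_le_sum fun i _ => ?_
    nlinarith [sq_nonneg (Δ i - u i - 4 * φ i)]
  have hb2 : ∑ i, (Δ i - u i) ^ 2 ≤ 2 * ∑ i, Δ i ^ 2 + 2 * ∑ i, u i ^ 2 := by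
    rw [Finset.mul_sum, Finset.mul_sum, ← Finset.sum_add_distrib]
    refine Finset.sum_le_sum fun i _ => ?_
    nlinarith [sq_nonneg (Δ i + u i)]
  -- bounds by M
  have hu2 : ∑ i, u i ^ 2 ≤ M := by
    have h3 : l2 u ≤ norm2inf (Ahat - A) * l1 βstar := l2_mulVec_le _ _
    have h4 : l2 u ^ 2 ≤ (norm2inf (Ahat - A) * l1 βstar) ^ 2 :=
      pow_le_pow_left₀ (l2_nonneg _) h3 2
    rw [l2_sq] at h4
    calc ∑ i, u i ^ 2 ≤ (norm2inf (Ahat - A) * l1 βstar) ^ 2 := h4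
      _ = norm2inf (Ahat - A) ^ 2 * l1 βstar ^ 2 := mul_pow _ _ _
      _ ≤ M := le_trans (le_max_left _ _) (le_max_left _ _)
  have hφ2 : ∑ i, φ i ^ 2 ≤ M := by
    rw [← l2_sq]
    exact le_trans (le_max_right _ _) (le_max_left _ _)
  have hDM : D ≤ M := le_max_right _ _
  -- conclude
  rw [l2_sq]
  linarith
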